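/- arXiv:2101.08735 — 2 statements merged into one kernel-verified Lean document; each statement's English description precedes it below -/
import Mathlib

section
/- Let M be a monoid, m : ℕ → M a sequence, t ≥ 2 a natural number, and ℓ ≤ r natural numbers. Define s_j := t^j·⌈ℓ/t^j⌉ and p_j := t^j·⌊r/t^j⌋, and let k be any natural number with s_k ≤ p_k. Then ℓ = s_0 ≤ s_1 ≤ ⋯ ≤ s_k ≤ p_k ≤ p_{k−1} ≤ ⋯ ≤ p_0 = r, and m[ℓ, r) = (∏_{j=0}^{k−1} m[s_j, s_{j+1})) · m[s_k, p_k) · (∏_{j=1}^{k} m[p_{k−j+1}, p_{k−j})), where each product is taken in order of increasing j. -/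
/-- `m[a, b)`: the ordered product `m(a)·m(a+1)⋯m(b−1)`, with `m[a,a) = 1`. -/
def prodRange {M : Type*} [Monoid M] (m : ℕ → M) (a b : ℕ) : M :=
  ((List.range' a (b - a)).map m).prod

lemma prodRange_split {M : Type*} [Monoid M] (m : ℕ → M) {a b c : ℕ} (hab : a ≤ b)
    (hbc : b ≤ c) : prodRange m a c = prodRange m a b * prodRange m b c := by
  unfold prodRange
  rw [← List.prod_append, ← List.map_append]
  congr 1
  have h := List.range'_append (s := a) (m := b-a) (n := c-b) (step := 1)
  simp only [one_mul] at h
  rw [Nat.add_sub_cancel' hab] at h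
  have h2 : b - a + (c - b) = c - a := by omega
  rw [h, h2]

lemma prodRange_telescope {M : Type*} [Monoid M] (m : ℕ → M) (f : ℕ → ℕ) (k : ℕ)
    (hf : ∀ j < k, f j ≤ f (j + 1)) :
    prodRange m (f 0) (f k) = ((List.range k).map fun j => prodRange m (f j) (f (j + 1))).prod := by
  induction k with
  | zero => simp [prodRange]
  | succ n ih =>
    have hmono : f 0 ≤ f n := by
      clear ih
      induction n with
      | zero => exact le_refl _
      | succ n ih => exact le_trans (ih (fun j hj => hf j (by omega))) (hf n (by omega))
    rw [prodRange_split m hmono (hf n (by omega)), ih (fun j hj => hf j (by omega)),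
      List.range_succ, List.map_append, List.prod_append]
    simp

lemma le_ceilmul (n l : ℕ) (hn : 0 < n) : l ≤ n * ((l + n - 1) / n) := by
  have h1 : n * ((l + n - 1) / n) = (l + n - 1) - (l + n - 1) % n := by
    have := Nat.mod_add_div (l + n - 1) n
    omega
  have h2 : (l + n - 1) % n < n := Nat.mod_lt _ hn
  omega

lemma ceilmul_min (n c l : ℕ) (hn : 0 < n) (hdvd : n ∣ c) (hlc : l ≤ c) :
    n * ((l + n - 1) / n) ≤ c := by
  obtain ⟨q, rfl⟩ := hdvd
  have h1 : l + n - 1 ≤ n * q + (n - 1) := by omega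
  have h2 : (l + n - 1) / n ≤ (n * q + (n - 1)) / n := Nat.div_le_div_right h1
  have h3 : (n - 1) / n = 0 := Nat.div_eq_of_lt (by omega)
  rw [Nat.mul_add_div hn, h3] at h2
  exact Nat.mul_le_mul_left n (by omega)

lemma floormul_max (n c r : ℕ) (hn : 0 < n) (hdvd : n ∣ c) (hcr : c ≤ r) :
    c ≤ n * (r / n) := by
  obtain ⟨q, rfl⟩ := hdvd
  exact Nat.mul_le_mul_left n (Nat.le_div_iff_mul_le hn |>.2 (by rw [mul_comm]; exact hcr))

/-- with `s_j = t^j·⌈l/t^j⌉` and `p_j = t^j·⌊r/t^j⌋` and `s_k ≤ p_k`,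
the points `l = s_0 ≤ s_1 ≤ ⋯ ≤ s_k ≤ p_k ≤ ⋯ ≤ p_0 = r` form a chain and
`m[l, r) = (∏_{j<k} m[s_j, s_{j+1})) · m[s_k, p_k) · (∏_{j=1}^{k} m[p_{k−j+1}, p_{k−j}))`. -/
theorem prodRange_decomposition {M : Type*} [Monoid M] (m : ℕ → M) (t : ℕ) (ht : 2 ≤ t)
    (l r : ℕ) (hlr : l ≤ r) (s p : ℕ → ℕ)
    (hs : ∀ j, s j = t ^ j * ((l + t ^ j - 1) / t ^ j))
    (hp : ∀ j, p j = t ^ j * (r / t ^ j))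
    (k : ℕ) (hk : s k ≤ p k) :
    s 0 = l ∧ p 0 = r ∧
    (∀ j < k, s j ≤ s (j + 1)) ∧ (∀ j < k, p (j + 1) ≤ p j) ∧
    prodRange m l r =
      ((List.range k).map fun j => prodRange m (s j) (s (j + 1))).prod *
        prodRange m (s k) (p k) *
        ((List.range k).map fun j => prodRange m (p (k - j)) (p (k - j - 1))).prod := by
  have htpos : ∀ j, 0 < t ^ j := fun j => pow_pos (by omega) j
  have hs0 : s 0 = l := by rw [hs 0]; simp
  have hp0 : p 0 = r := by rw [hp 0]; simp
  have hls : ∀ j, l ≤ s j := fun j => (hs j) ▸ le_ceilmul (t ^ j) l (htpos j)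
  have hpr : ∀ j, p j ≤ r := fun j => (hp j) ▸ Nat.mul_div_le r (t ^ j)
  have hsmono : ∀ j, s j ≤ s (j + 1) := by
    intro j
    rw [hs j]
    apply ceilmul_min _ _ _ (htpos j) _ (hls (j + 1))
    rw [hs (j + 1)]
    exact Dvd.dvd.mul_right (pow_dvd_pow t (Nat.le_succ j)) _
  have hpmono : ∀ j, p (j + 1) ≤ p j := by
    intro j
    rw [hp j]
    apply floormul_max _ _ _ (htpos j) _ (hpr (j + 1))
    rw [hp (j + 1)]
    exact Dvd.dvd.mul_right (pow_dvd_pow t (Nat.le_succ j)) _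
  have hsMono : Monotone s := monotone_nat_of_le_succ hsmono
  have hpAnti : Antitone p := antitone_nat_of_succ_le hpmono
  refine ⟨hs0, hp0, fun j _ => hsmono j, fun j _ => hpmono j, ?_⟩
  have h1 : s 0 ≤ s k := hsMono (Nat.zero_le k)
  have h2 : p k ≤ p 0 := hpAnti (Nat.zero_le k)
  have h3 : prodRange m (p k) (p 0) =
      ((List.range k).map fun j => prodRange m (p (k - j)) (p (k - j - 1))).prod := by
    have h4 := prodRange_telescope m (fun j => p (k - j)) k
      (fun j hj => hpAnti (show k - (j + 1) ≤ k - j by omega))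
    simpa [Nat.sub_sub] using h4
  rw [← hs0, ← hp0, prodRange_split m h1 (le_trans hk h2), prodRange_split m hk h2,
    h3, prodRange_telescope m s k (fun j _ => hsmono j), mul_assoc]
end

section
/- Every finite group-free monoid M satisfies at least one of the following: (a) M = {1}; (b) there exist σ ∈ M and k ≥ 1 such that M \ {1} = {σ, σ², …, σ^k} and σ^k = σ^{k+1}; (c) σ·σ' = σ for all σ, σ' ∈ M \ {1}; (d) there exist submonoids V and T of M with V ≠ M and T ≠ M such that M = V ∪ T and T \ {1} is a left ideal of M, i.e., σ_M·σ_T ∈ T \ {1} for all σ_M ∈ M and σ_T ∈ T \ {1}. -/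
section Aux

variable {M : Type*} [Monoid M] [Fintype M]

/-- If `x ^ k = x ^ (k+1)` then all later powers equal `x ^ k`. -/
private lemma pow_stab (x : M) (k : ℕ) (h : x ^ k = x ^ (k + 1)) :
    ∀ j, x ^ (k + j) = x ^ k := by
  intro j
  induction j with
  | zero => rfl
  | succ n ih =>
    calc x ^ (k + (n + 1)) = x ^ (k + n) * x := by
          rw [show k + (n + 1) = (k + n) + 1 by omega, pow_succ]
    _ = x ^ k * x := by rw [ih]
    _ = x ^ k := by rw [← pow_succ, ← h]

/-- Aperiodicity: in a group-free finite monoid every element satisfies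
`x ^ k = x ^ (k+1)` for some `k ≥ 1`. -/
private lemma exists_pow_stab
    (hgf : ∀ S : Set M, (∀ a ∈ S, ∀ b ∈ S, a * b ∈ S) →
      (∃ e ∈ S, (∀ a ∈ S, e * a = a ∧ a * e = a) ∧
        ∀ a ∈ S, ∃ b ∈ S, a * b = e ∧ b * a = e) →
      ∃ x, S = {x}) (x : M) : ∃ k, 1 ≤ k ∧ x ^ k = x ^ (k + 1) := by
  obtain ⟨i, j, hij, hxij⟩ := Finite.exists_ne_map_eq_of_infinite (fun n : ℕ => x ^ n)
  -- produce a ≥ 1, b ≥ 1 with x ^ a = x ^ (a + b)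
  obtain ⟨a, b, ha, hb, hab⟩ : ∃ a b : ℕ, 1 ≤ a ∧ 1 ≤ b ∧ x ^ a = x ^ (a + b) := by
    rcases lt_or_gt_of_ne hij with h | h
    · rcases Nat.eq_zero_or_pos i with rfl | hi
      · refine ⟨j, j, by omega, by omega, ?_⟩
        have h1 : x ^ j = 1 := by simpa using hxij.symm
        rw [pow_add, h1, one_mul]
      · exact ⟨i, j - i, hi, by omega, by rw [show i + (j - i) = j by omega]; exact hxij⟩
    · rcases Nat.eq_zero_or_pos j with rfl | hj
      · refine ⟨i, i, by omega, by omega, ?_⟩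
        have h1 : x ^ i = 1 := by simpa using hxij
        rw [pow_add, h1, one_mul]
      · exact ⟨j, i - j, hj, by omega, by rw [show j + (i - j) = i by omega]; exact hxij.symm⟩
  -- periodicity lemma
  have L1 : ∀ n, a ≤ n → x ^ (n + b) = x ^ n := by
    intro n hn
    obtain ⟨s, rfl⟩ := Nat.exists_eq_add_of_le hn
    calc x ^ (a + s + b) = x ^ (a + b) * x ^ s := by rw [← pow_add]; ring_nf
    _ = x ^ a * x ^ s := by rw [← hab]
    _ = x ^ (a + s) := by rw [← pow_add]
  have L : ∀ n, a ≤ n → ∀ t, x ^ (n + t * b) = x ^ n := by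
    intro n hn t
    induction t with
    | zero => simp
    | succ u ih =>
      calc x ^ (n + (u + 1) * b) = x ^ (n + u * b + b) := by ring_nf
      _ = x ^ (n + u * b) := L1 _ (by omega)
      _ = x ^ n := ih
  set S : Set M := {y | ∃ n, a ≤ n ∧ y = x ^ n} with hS
  have hcl : ∀ p ∈ S, ∀ q ∈ S, p * q ∈ S := by
    rintro p ⟨m, hm, rfl⟩ q ⟨n, hn, rfl⟩
    exact ⟨m + n, by omega, (pow_add x m n).symm⟩
  have hgrp : ∃ e ∈ S, (∀ p ∈ S, e * p = p ∧ p * e = p) ∧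
      ∀ p ∈ S, ∃ q ∈ S, p * q = e ∧ q * p = e := by
    refine ⟨x ^ (a * b), ⟨a * b, Nat.le_mul_of_pos_right a hb, rfl⟩, ?_, ?_⟩
    · rintro p ⟨n, hn, rfl⟩
      constructor
      · calc x ^ (a * b) * x ^ n = x ^ (n + a * b) := by rw [← pow_add]; ring_nf
        _ = x ^ n := L n hn a
      · calc x ^ n * x ^ (a * b) = x ^ (n + a * b) := by rw [← pow_add]
        _ = x ^ n := L n hn a
    · rintro p ⟨n, hn, rfl⟩
      obtain ⟨c, hc⟩ : ∃ c, b = c + 1 := ⟨b - 1, by omega⟩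
      refine ⟨x ^ (n * c + a * b), ⟨n * c + a * b, by
        have : a ≤ a * b := Nat.le_mul_of_pos_right a hb; omega, rfl⟩, ?_, ?_⟩
      · calc x ^ n * x ^ (n * c + a * b) = x ^ (a * b + n * b) := by
              rw [← pow_add]; congr 1; rw [hc]; ring
        _ = x ^ (a * b) := L (a * b) (Nat.le_mul_of_pos_right a hb) n
      · calc x ^ (n * c + a * b) * x ^ n = x ^ (a * b + n * b) := by
              rw [← pow_add]; congr 1; rw [hc]; ring
        _ = x ^ (a * b) := L (a * b) (Nat.le_mul_of_pos_right a hb) n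
  obtain ⟨c, hc⟩ := hgf S hcl hgrp
  have h1 : x ^ a ∈ S := ⟨a, le_refl a, rfl⟩
  have h2 : x ^ (a + 1) ∈ S := ⟨a + 1, by omega, rfl⟩
  rw [hc] at h1 h2
  exact ⟨a, ha, h1.trans h2.symm⟩

/-- In a group-free finite monoid, `a * b = 1` forces `a = b = 1`. -/
private lemma gf_mul_eq_one
    (hgf : ∀ S : Set M, (∀ a ∈ S, ∀ b ∈ S, a * b ∈ S) →
      (∃ e ∈ S, (∀ a ∈ S, e * a = a ∧ a * e = a) ∧
        ∀ a ∈ S, ∃ b ∈ S, a * b = e ∧ b * a = e) →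
      ∃ x, S = {x}) (a b : M) (h : a * b = 1) : a = 1 ∧ b = 1 := by
  obtain ⟨k, hk1, hk⟩ := exists_pow_stab hgf a
  have hpow : ∀ n : ℕ, a ^ n * b ^ n = 1 := by
    intro n
    induction n with
    | zero => simp
    | succ m ih =>
      calc a ^ (m + 1) * b ^ (m + 1) = a ^ m * a * (b * b ^ m) := by
            rw [pow_succ, pow_succ']
      _ = a ^ m * (a * b * b ^ m) := by rw [mul_assoc, mul_assoc]
      _ = a ^ m * b ^ m := by rw [h, one_mul]
      _ = 1 := ih
  have ha : a = 1 := by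
    have h1 : a * (a ^ k * b ^ k) = a ^ (k + 1) * b ^ k := by
      rw [pow_succ', mul_assoc]
    rw [hpow k, mul_one, ← hk, hpow k] at h1
    exact h1
  exact ⟨ha, by rw [ha, one_mul] at h; exact h⟩

end Aux

/-- Krohn–Rhodes-style case distinction. Every finite group-free
monoid `M` (no subset closed under multiplication forms a nontrivial group)
satisfies (a), (b), (c) or (d). -/
theorem groupFree_monoid_cases {M : Type*} [Monoid M] [Fintype M]
    (hgf : ∀ S : Set M, (∀ a ∈ S, ∀ b ∈ S, a * b ∈ S) →
      (∃ e ∈ S, (∀ a ∈ S, e * a = a ∧ a * e = a) ∧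
        ∀ a ∈ S, ∃ b ∈ S, a * b = e ∧ b * a = e) →
      ∃ x, S = {x}) :
    -- (a) M = {1}
    (∀ x : M, x = 1) ∨
    -- (b) M \ {1} = {σ, σ², …, σ^k} with σ^k = σ^{k+1}
    (∃ (σ : M) (k : ℕ), 1 ≤ k ∧
      {x : M | x ≠ 1} = {x : M | ∃ i, 1 ≤ i ∧ i ≤ k ∧ x = σ ^ i} ∧
      σ ^ k = σ ^ (k + 1)) ∨
    -- (c) σ·σ' = σ for all σ, σ' ≠ 1
    (∀ a b : M, a ≠ 1 → b ≠ 1 → a * b = a) ∨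
    -- (d) M = V ∪ T with proper submonoids V, T and T \ {1} a left ideal
    (∃ V T : Submonoid M, (V : Set M) ≠ Set.univ ∧ (T : Set M) ≠ Set.univ ∧
      (V : Set M) ∪ (T : Set M) = Set.univ ∧
      ∀ m : M, ∀ s ∈ T, s ≠ 1 → m * s ∈ T ∧ m * s ≠ 1) := by
  classical
  by_cases htriv : ∀ x : M, x = 1
  · exact Or.inl htriv
  by_cases hmono : ∃ σ : M, ∀ x : M, x ∈ Submonoid.powers σ
  · -- case (b)
    obtain ⟨σ, hσ⟩ := hmono
    push_neg at htriv
    obtain ⟨x₀, hx₀⟩ := htriv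
    have hσ1 : σ ≠ 1 := by
      rintro rfl
      obtain ⟨n, hn⟩ := hσ x₀
      exact hx₀ (by simpa using hn.symm)
    obtain ⟨k, hk1, hk⟩ := exists_pow_stab hgf σ
    refine Or.inr (Or.inl ⟨σ, k, hk1, ?_, hk⟩)
    ext x
    simp only [Set.mem_setOf_eq]
    constructor
    · intro hx
      obtain ⟨n, hn⟩ := hσ x
      rcases Nat.eq_zero_or_pos n with rfl | hn1
      · exact absurd hn.symm (by simpa using hx)
      rcases le_or_gt n k with h | h
      · exact ⟨n, hn1, h, hn.symm⟩
      · have hn' : σ ^ n = x := hn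
        refine ⟨k, hk1, le_refl k, ?_⟩
        rw [← hn', show n = k + (n - k) by omega, pow_stab σ k hk]
    · rintro ⟨i, hi1, _, rfl⟩
      intro hcon
      obtain ⟨i', rfl⟩ : ∃ i', i = i' + 1 := ⟨i - 1, by omega⟩
      rw [pow_succ'] at hcon
      exact hσ1 (gf_mul_eq_one hgf σ (σ ^ i') hcon).1
  -- notation: N = nonidentity elements
  set N : Set M := {x | x ≠ 1} with hN
  have hmulN : ∀ a b : M, a ∈ N → a * b ∈ N := by
    intro a b ha hab
    exact ha (gf_mul_eq_one hgf a b hab).1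
  have hmulN' : ∀ a b : M, b ∈ N → a * b ∈ N := by
    intro a b hb hab
    exact hb (gf_mul_eq_one hgf a b hab).2
  by_cases hall : ∀ a : M, a ≠ 1 → ∀ x : M, x ≠ 1 → ∃ m : M, m * a = x
  · -- case (c)
    refine Or.inr (Or.inr (Or.inl ?_))
    intro a b ha hb
    obtain ⟨k, hk1, hk⟩ := exists_pow_stab hgf b
    have hbk : (b : M) ^ k ≠ 1 := by
      intro hcon
      obtain ⟨k', rfl⟩ : ∃ k', k = k' + 1 := ⟨k - 1, by omega⟩
      rw [pow_succ'] at hcon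
      exact hb (gf_mul_eq_one hgf b (b ^ k') hcon).1
    obtain ⟨m, hm⟩ := hall (b ^ k) hbk a ha
    calc a * b = m * b ^ k * b := by rw [hm]
    _ = m * b ^ (k + 1) := by rw [mul_assoc, ← pow_succ]
    _ = m * b ^ k := by rw [← hk]
    _ = a := hm
  · -- case (d)
    push_neg at hall
    obtain ⟨a₀, ha₀, x₀, hx₀, hax⟩ := hall
    -- the collection of proper nonempty left ideals inside N
    set 𝒮 : Set (Set M) :=
      {I | I.Nonempty ∧ I ⊆ N ∧ I ≠ N ∧ ∀ m x : M, x ∈ I → m * x ∈ I} with h𝒮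
    have hS0 : {y : M | ∃ m, y = m * a₀} ∈ 𝒮 := by
      refine ⟨⟨a₀, 1, (one_mul a₀).symm⟩, ?_, ?_, ?_⟩
      · rintro y ⟨m, rfl⟩; exact hmulN' m a₀ ha₀
      · intro hcon
        have : x₀ ∈ {y : M | ∃ m, y = m * a₀} := by rw [hcon]; exact hx₀
        obtain ⟨m, hm⟩ := this
        exact hax m hm.symm
      · rintro m x ⟨m', rfl⟩; exact ⟨m * m', (mul_assoc m m' a₀).symm⟩
    obtain ⟨I, hI, hImax⟩ :=
      Set.Finite.exists_maximalFor id 𝒮 (Set.toFinite 𝒮) ⟨_, hS0⟩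
    simp only [id] at hImax
    obtain ⟨hInon, hIsub, hIne, hIid⟩ := hI
    set G : Set M := N \ I with hG
    have hGnon : G.Nonempty := by
      rcases Set.exists_of_ssubset (hIsub.ssubset_of_ne hIne) with ⟨g, hg1, hg2⟩
      exact ⟨g, hg1, hg2⟩
    -- maximality: for g ∈ G, I ∪ Mg = N
    have lem3 : ∀ g ∈ G, I ∪ {y : M | ∃ m, y = m * g} = N := by
      intro g hg
      by_contra hne'
      have hmem : (I ∪ {y : M | ∃ m, y = m * g}) ∈ 𝒮 := by
        refine ⟨hInon.mono Set.subset_union_left, ?_, hne', ?_⟩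
        · rintro y (hy | ⟨m, rfl⟩)
          · exact hIsub hy
          · exact hmulN' m g hg.1
        · rintro m x (hx | ⟨m', rfl⟩)
          · exact Or.inl (hIid m x hx)
          · exact Or.inr ⟨m * m', (mul_assoc m m' g).symm⟩
      have heq := hImax hmem Set.subset_union_left
      have : g ∈ I := by
        exact heq (Or.inr ⟨1, (one_mul g).symm⟩)
      exact hg.2 this
    -- Suppose the closure of G is everything; derive a contradiction.
    have hclosure : (Submonoid.closure G : Set M) ≠ Set.univ := by
      intro hcl'
      have hcl : Submonoid.closure G = ⊤ :=
        SetLike.ext' (by rw [hcl', Submonoid.coe_top])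
      have lem4 : ∀ t ∈ I, ∃ m g, g ∈ G ∧ t = m * g := by
        intro t ht
        have htop : t ∈ Submonoid.closure G := by rw [hcl]; trivial
        obtain ⟨l, hl, hprod⟩ := Submonoid.exists_list_of_mem_closure htop
        rcases l.eq_nil_or_concat' with rfl | ⟨L, g, rfl⟩
        · simp only [List.prod_nil] at hprod
          exact absurd hprod.symm (hIsub ht)
        · refine ⟨L.prod, g, hl g (by simp), ?_⟩
          rw [← hprod, List.prod_append, List.prod_cons, List.prod_nil, mul_one]
      have lem5 : ∀ g ∈ G, ∀ x : M, x ≠ 1 → ∃ m : M, x = m * g := by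
        intro g hg x hx
        have hxN : x ∈ I ∪ {y : M | ∃ m, y = m * g} := by rw [lem3 g hg]; exact hx
        rcases hxN with hxI | hxg
        · obtain ⟨m, g', hg', rfl⟩ := lem4 x hxI
          have : g' ∈ I ∪ {y : M | ∃ m, y = m * g} := by rw [lem3 g hg]; exact hg'.1
          rcases this with h' | ⟨m', rfl⟩
          · exact absurd h' hg'.2
          · exact ⟨m * m', (mul_assoc m m' g).symm⟩
        · exact hxg
      by_cases hB : ∃ h ∈ G, ∀ n : M, n * h = h → n = 1
      · -- counting case
        obtain ⟨h, hhG, hh⟩ := hB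
        have himg : ((· * h) '' N) ⊆ I := by
          rintro _ ⟨x, hxN, rfl⟩
          have hxh : x * h ∈ N := hmulN x h hxN
          by_contra hnotI
          have hxhG : x * h ∈ G := ⟨hxh, hnotI⟩
          obtain ⟨m, hm⟩ := lem5 (x * h) hxhG h hhG.1
          rw [← mul_assoc] at hm
          have := hh (m * x) hm.symm
          exact hxN (gf_mul_eq_one hgf m x this).2
        have hcov : N ⊆ insert h ((· * h) '' N) := by
          intro x hxN
          obtain ⟨m, hm⟩ := lem5 h hhG x hxN
          by_cases hm1 : m = 1
          · left; rw [hm, hm1, one_mul]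
          · right; exact ⟨m, hm1, hm.symm⟩
        have hc1 : N.ncard ≤ ((· * h) '' N).ncard + 1 :=
          le_trans (Set.ncard_le_ncard hcov (Set.toFinite _)) (Set.ncard_insert_le _ _)
        have hc3 : ((· * h) '' N).ncard ≤ I.ncard :=
          Set.ncard_le_ncard himg (Set.toFinite _)
        have hc4 : G.ncard = N.ncard - I.ncard := Set.ncard_diff hIsub (Set.toFinite _)
        have hc5 : I.ncard ≤ N.ncard := Set.ncard_le_ncard hIsub (Set.toFinite _)
        have hG1 : G.ncard ≤ 1 := by omega
        have hGsing : ∀ g ∈ G, g = h := by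
          intro g hg
          by_contra hne'
          have hsub : ({g, h} : Set M) ⊆ G := by
            rintro y (rfl | rfl)
            exacts [hg, hhG]
          have := Set.ncard_le_ncard hsub (Set.toFinite _)
          rw [Set.ncard_pair hne'] at this
          omega
        have hGeq : G = {h} :=
          Set.eq_singleton_iff_unique_mem.mpr ⟨hhG, hGsing⟩
        have hpow : Submonoid.powers h = ⊤ := by
          rw [Submonoid.powers_eq_closure, ← hGeq, hcl]
        exact hmono ⟨h, fun x => hpow ▸ Submonoid.mem_top x⟩
      · -- G ∪ {1} is closed under multiplication: contradiction
        push_neg at hB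
        have hGclosed : ∀ a ∈ G, ∀ b ∈ G, a * b ∈ insert 1 G := by
          intro a ha b hb
          right
          refine ⟨hmulN a b ha.1, ?_⟩
          intro habI
          obtain ⟨n, hn1, hn2⟩ := hB b hb
          obtain ⟨m, hm⟩ := lem5 a ha n hn2
          have : b = m * (a * b) := by
            rw [← mul_assoc, ← hm, hn1]
          have : b ∈ I := this ▸ hIid m (a * b) habI
          exact hb.2 this
        set W : Submonoid M :=
          { carrier := insert 1 G
            one_mem' := Or.inl rfl
            mul_mem' := by
              rintro a b (rfl | ha) (rfl | hb)
              · exact Or.inl (one_mul 1)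
              · rw [one_mul]; exact Or.inr hb
              · rw [mul_one]; exact Or.inr ha
              · exact hGclosed a ha b hb } with hW
        have hle : Submonoid.closure G ≤ W :=
          Submonoid.closure_le.mpr (fun g hg => Or.inr hg)
        obtain ⟨t₀, ht₀⟩ := hInon
        have : t₀ ∈ W := hle (by rw [hcl]; trivial)
        rcases this with h1 | h2
        · exact (hIsub ht₀) h1
        · exact h2.2 ht₀
    -- now assemble V and T
    refine Or.inr (Or.inr (Or.inr ⟨Submonoid.closure G,
      { carrier := insert 1 I
        one_mem' := Or.inl rfl
        mul_mem' := by
          rintro a b (rfl | ha) (rfl | hb)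
          · exact Or.inl (one_mul 1)
          · rw [one_mul]; exact Or.inr hb
          · rw [mul_one]; exact Or.inr ha
          · exact Or.inr (hIid a b hb) }, hclosure, ?_, ?_, ?_⟩))
    · intro hcon
      obtain ⟨g, hg⟩ := hGnon
      have : g ∈ insert 1 I := by
        have := Set.ext_iff.mp hcon g
        exact this.mpr trivial
      rcases this with rfl | hgI
      · exact hg.1 rfl
      · exact hg.2 hgI
    · ext x
      simp only [Set.mem_union, Set.mem_univ, iff_true]
      by_cases hx1 : x = 1
      · exact Or.inr (Or.inl hx1)
      by_cases hxI : x ∈ I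
      · exact Or.inr (Or.inr hxI)
      · exact Or.inl (Submonoid.subset_closure ⟨hx1, hxI⟩)
    · intro m s hs hs1
      rcases hs with rfl | hsI
      · exact absurd rfl hs1
      · exact ⟨Or.inr (hIid m s hsI), hIsub (hIid m s hsI)⟩
end
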